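/- Let Λ be a finite dimensional algebra. The lattice of torsion classes tors(Λ) is semidistributive, i.e., both meet-semidistributive and join-semidistributive. -/

import Mathlib

open CategoryTheory

universe u

/-- A torsion class in `Λ`-mod (finite-dimensional modules): a class of
finite-dimensional modules containing the zero modules and closed under
quotients and extensions. -/
def IsTorsionClass (Λ : Type u) [Ring Λ] (T : Set (ModuleCat.{u} Λ)) : Prop :=
  T ⊆ {X | Module.Finite Λ X} ∧
  (∀ X : ModuleCat.{u} Λ, Module.Finite Λ X → Subsingleton X → X ∈ T) ∧
  (∀ X Y : ModuleCat.{u} Λ, X ∈ T → ∀ f : X ⟶ Y, Function.Surjective f → Y ∈ T) ∧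
  (∀ (X : ModuleCat.{u} Λ) (N : Submodule Λ X), Module.Finite Λ X →
    ModuleCat.of Λ N ∈ T → ModuleCat.of Λ (X ⧸ N) ∈ T → X ∈ T)

/-- The join of two torsion classes: the smallest torsion class containing both. -/
def torsJoin (Λ : Type u) [Ring Λ] (T U : Set (ModuleCat.{u} Λ)) : Set (ModuleCat.{u} Λ) :=
  ⋂₀ {V | IsTorsionClass Λ V ∧ T ⊆ V ∧ U ⊆ V}

namespace Stmt6
variable {Λ : Type u} [Ring Λ]

lemma tc_iso {T : Set (ModuleCat.{u} Λ)} (hT : IsTorsionClass Λ T) {X Y : ModuleCat.{u} Λ}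
    (e : X ≃ₗ[Λ] Y) (hX : X ∈ T) : Y ∈ T :=
  hT.2.2.1 X Y hX (ModuleCat.ofHom e.toLinearMap) e.surjective

lemma fin_subsingleton (X : ModuleCat.{u} Λ) [Subsingleton X] : Module.Finite Λ X :=
  Module.Finite.of_surjective ((⊥ : Submodule Λ X).subtype)
    (fun x => ⟨⟨0, Submodule.zero_mem _⟩, Subsingleton.elim _ x⟩)

lemma tc_zero {T : Set (ModuleCat.{u} Λ)} (hT : IsTorsionClass Λ T) (X : ModuleCat.{u} Λ)
    [Subsingleton X] : X ∈ T :=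
  hT.2.1 X (fin_subsingleton X) ‹_›

lemma tc_sup {T : Set (ModuleCat.{u} Λ)} (hT : IsTorsionClass Λ T) {X : ModuleCat.{u} Λ}
    {N S : Submodule Λ X} (hN : ModuleCat.of Λ N ∈ T) (hS : ModuleCat.of Λ S ∈ T) :
    ModuleCat.of Λ ↥(N ⊔ S) ∈ T := by
  have hNf : Module.Finite Λ N := hT.1 hN
  have hSf : Module.Finite Λ S := hT.1 hS
  have hfin : Module.Finite Λ ↥(N ⊔ S) := Module.Finite.iff_fg.mpr
    (Submodule.FG.sup (Module.Finite.iff_fg.mp hNf) (Module.Finite.iff_fg.mp hSf))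
  set N' : Submodule Λ (ModuleCat.of Λ ↥(N ⊔ S)) := N.comap (N ⊔ S).subtype with hN'def
  apply hT.2.2.2 (ModuleCat.of Λ ↥(N ⊔ S)) N' hfin
  · exact tc_iso hT (Submodule.comapSubtypeEquivOfLe le_sup_left).symm hN
  · apply hT.2.2.1 (ModuleCat.of Λ S) _ hS (ModuleCat.ofHom (N'.mkQ.comp (Submodule.inclusion le_sup_right)))
    intro x
    obtain ⟨y, rfl⟩ := N'.mkQ_surjective x
    obtain ⟨n, hn, s, hs, hy⟩ := Submodule.mem_sup.mp y.2
    refine ⟨⟨s, hs⟩, ?_⟩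
    show N'.mkQ _ = N'.mkQ y
    rw [eq_comm, Submodule.mkQ_apply, Submodule.mkQ_apply, Submodule.Quotient.eq]
    show y.1 - s ∈ N
    rw [← hy, add_sub_cancel_right]
    exact hn

def tperp (T : Set (ModuleCat.{u} Λ)) : Set (ModuleCat.{u} Λ) :=
  {Y | Module.Finite Λ Y ∧ ∀ N : Submodule Λ Y, ModuleCat.of Λ N ∈ T → N = ⊥}

def perpt (F : Set (ModuleCat.{u} Λ)) : Set (ModuleCat.{u} Λ) :=
  {X | Module.Finite Λ X ∧ ∀ Y ∈ F, ∀ f : X →ₗ[Λ] Y, f = 0}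

lemma tperp_anti {T T' : Set (ModuleCat.{u} Λ)} (h : T ⊆ T') : tperp T' ⊆ tperp T :=
  fun _ hY => ⟨hY.1, fun N hN => hY.2 N (h hN)⟩

lemma perpt_anti {F F' : Set (ModuleCat.{u} Λ)} (h : F ⊆ F') : perpt F' ⊆ perpt F :=
  fun _ hX => ⟨hX.1, fun Y hY => hX.2 Y (h hY)⟩

lemma perpt_tc (F : Set (ModuleCat.{u} Λ)) : IsTorsionClass Λ (perpt F) := by
  refine ⟨fun X hX => hX.1, ?_, ?_, ?_⟩
  · intro X hfin hsub
    exact ⟨hfin, fun Y _ f => LinearMap.ext fun x => by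
      rw [Subsingleton.elim x 0, map_zero]; rfl⟩
  · intro X Y hX f hf
    haveI : Module.Finite Λ X := hX.1
    refine ⟨Module.Finite.of_surjective f.hom hf, ?_⟩
    intro Z hZ g
    have h0 : g.comp f.hom = 0 := hX.2 Z hZ _
    apply LinearMap.ext
    intro y
    obtain ⟨x, rfl⟩ := hf y
    exact LinearMap.ext_iff.mp h0 x
  · intro X N hfin hN hQ
    refine ⟨hfin, ?_⟩
    intro Y hY f
    have h1 : f.comp N.subtype = 0 := hN.2 Y hY _
    have hle : N ≤ LinearMap.ker f := fun x hx => by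
      have := LinearMap.ext_iff.mp h1 ⟨x, hx⟩
      simpa using this
    have h2 : N.liftQ f hle = 0 := hQ.2 Y hY _
    have h3 : (N.liftQ f hle).comp N.mkQ = f := N.liftQ_mkQ f hle
    rw [← h3, h2, LinearMap.zero_comp]

lemma tc_sub_perpt {T : Set (ModuleCat.{u} Λ)} (hT : IsTorsionClass Λ T) {F : Set (ModuleCat.{u} Λ)}
    (hF : F ⊆ tperp T) : T ⊆ perpt F := by
  intro X hX
  refine ⟨hT.1 hX, fun Y hY f => ?_⟩
  have hr : ModuleCat.of Λ (LinearMap.range f) ∈ T :=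
    hT.2.2.1 X _ hX (ModuleCat.ofHom f.rangeRestrict) f.surjective_rangeRestrict
  have := (hF hY).2 _ hr
  exact LinearMap.range_eq_bot.mp this


lemma noeth (k : Type u) [Field k] [Algebra k Λ] [FiniteDimensional k Λ]
    (X : ModuleCat.{u} Λ) (h : Module.Finite Λ X) : IsNoetherian Λ X := by
  letI : Module k X := Module.compHom X (algebraMap k Λ)
  haveI : IsScalarTower k Λ X := ⟨fun c l x => by
    show (c • l) • x = algebraMap k Λ c • (l • x)
    rw [Algebra.smul_def, mul_smul]⟩
  haveI : Module.Finite k X := Module.Finite.trans Λ X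
  haveI : IsNoetherian k X := IsNoetherian.iff_fg.mpr ‹_›
  exact isNoetherian_of_tower k ‹IsNoetherian k X›

noncomputable def kdim (k : Type u) [Field k] {Λ : Type u} [Ring Λ] [Algebra k Λ]
    (M : ModuleCat.{u} Λ) : ℕ :=
  @Module.finrank k M _ _ (Module.compHom M (algebraMap k Λ))

lemma kdim_lt_of_surj (k : Type u) [Field k] [Algebra k Λ] [FiniteDimensional k Λ]
    (M N : ModuleCat.{u} Λ) (hM : Module.Finite Λ M)
    (f : M →ₗ[Λ] N) (hf : Function.Surjective f) {x : M} (hx : x ≠ 0) (hfx : f x = 0) :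
    kdim k N < kdim k M := by
  letI : Module k M := Module.compHom M (algebraMap k Λ)
  letI : Module k N := Module.compHom N (algebraMap k Λ)
  haveI : IsScalarTower k Λ M := ⟨fun c l x => by
    show (c • l) • x = algebraMap k Λ c • (l • x); rw [Algebra.smul_def, mul_smul]⟩
  haveI : Module.Finite k M := Module.Finite.trans Λ M
  haveI : FiniteDimensional k M := ‹_›
  let g : M →ₗ[k] N :=
    { toFun := f, map_add' := f.map_add,
      map_smul' := fun c y => f.map_smul (algebraMap k Λ c) y }
  have hrange : LinearMap.range g = ⊤ := LinearMap.range_eq_top.mpr hf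
  have h1 := LinearMap.finrank_range_add_finrank_ker g
  have hker : 0 < Module.finrank k (LinearMap.ker g) := by
    have : Nontrivial (LinearMap.ker g) :=
      ⟨⟨⟨x, hfx⟩, 0, fun hh => hx (by simpa using congrArg Subtype.val hh)⟩⟩
    exact Module.finrank_pos_iff.mpr this
  have h2 : Module.finrank k N = Module.finrank k (LinearMap.range g) := by
    rw [hrange]; exact (finrank_top k N).symm
  show Module.finrank k N < Module.finrank k M
  omega

lemma kdim_lt_of_proper (k : Type u) [Field k] [Algebra k Λ] [FiniteDimensional k Λ]
    (M : ModuleCat.{u} Λ) (hM : Module.Finite Λ M) (N : Submodule Λ M) (hN : N ≠ ⊤) :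
    kdim k (ModuleCat.of Λ N) < kdim k M := by
  letI : Module k M := Module.compHom M (algebraMap k Λ)
  letI : Module k N := Module.compHom N (algebraMap k Λ)
  haveI : IsScalarTower k Λ M := ⟨fun c l x => by
    show (c • l) • x = algebraMap k Λ c • (l • x); rw [Algebra.smul_def, mul_smul]⟩
  haveI : Module.Finite k M := Module.Finite.trans Λ M
  haveI : FiniteDimensional k M := ‹_›
  let g : N →ₗ[k] M :=
    { toFun := N.subtype, map_add' := fun a b => rfl,
      map_smul' := fun c y => rfl }
  have hginj : Function.Injective g := fun a b hab => Subtype.ext hab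
  have h2 : Module.finrank k N = Module.finrank k (LinearMap.range g) :=
    (LinearEquiv.ofInjective g hginj).finrank_eq
  have h3 : LinearMap.range g < ⊤ := by
    rcases lt_top_iff_ne_top.mpr hN with h
    rw [lt_top_iff_ne_top]
    intro htop
    apply hN
    rw [eq_top_iff]
    intro x _
    obtain ⟨y, hy⟩ : x ∈ LinearMap.range g := htop ▸ Submodule.mem_top
    exact hy ▸ y.2
  have h4 : Module.finrank k (LinearMap.range g) < Module.finrank k M :=
    Submodule.finrank_lt (by exact h3.ne)
  show Module.finrank k N < Module.finrank k M
  omega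

lemma exists_max_sub (k : Type u) [Field k] [Algebra k Λ] [FiniteDimensional k Λ]
    {T : Set (ModuleCat.{u} Λ)} (hT : IsTorsionClass Λ T) (X : ModuleCat.{u} Λ)
    (hX : Module.Finite Λ X) :
    ∃ N : Submodule Λ X, ModuleCat.of Λ N ∈ T ∧
      (∀ S : Submodule Λ X, ModuleCat.of Λ S ∈ T → S ≤ N) ∧
      ModuleCat.of Λ (X ⧸ N) ∈ tperp T := by
  haveI hnoe : IsNoetherian Λ X := noeth k X hX
  obtain ⟨N, hNmem, hNmax⟩ := set_has_maximal_iff_noetherian.mpr hnoe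
    {N : Submodule Λ X | ModuleCat.of Λ N ∈ T} ⟨⊥, tc_zero hT _⟩
  have hmax : ∀ S : Submodule Λ X, ModuleCat.of Λ S ∈ T → S ≤ N := by
    intro S hS
    have hsup : ModuleCat.of Λ ↥(N ⊔ S) ∈ T := tc_sup hT hNmem hS
    have : N ⊔ S = N := by
      by_contra hne
      exact hNmax _ hsup (lt_of_le_of_ne le_sup_left (Ne.symm hne))
    exact this ▸ le_sup_right
  refine ⟨N, hNmem, hmax, ?_⟩
  haveI : Module.Finite Λ X := hX
  constructor
  · exact Module.Finite.of_surjective N.mkQ N.mkQ_surjective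
  · intro S' hS'
    set P : Submodule Λ X := S'.comap N.mkQ with hPdef
    have hNP : N ≤ P := by
      intro x hx
      show N.mkQ x ∈ S'
      have : N.mkQ x = 0 := by
        rw [Submodule.mkQ_apply, Submodule.Quotient.mk_eq_zero]; exact hx
      rw [this]; exact S'.zero_mem
    -- the canonical map P → S'
    have hmem : ∀ x : P, N.mkQ (P.subtype x) ∈ S' := fun x => x.2
    set φ : ↥P →ₗ[Λ] ↥S' := (N.mkQ.comp P.subtype).codRestrict S' hmem with hφdef
    have hφsurj : Function.Surjective φ := by
      rintro ⟨s', hs'⟩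
      obtain ⟨x, rfl⟩ := N.mkQ_surjective s'
      exact ⟨⟨x, hs'⟩, rfl⟩
    have hkerφ : LinearMap.ker φ = N.comap P.subtype := by
      ext x
      constructor
      · intro hx
        have h8 := congrArg Subtype.val (show φ x = 0 from hx)
        have h9 : (x : X) ∈ N := by
          have h10 : N.mkQ (P.subtype x) = 0 := h8
          rwa [Submodule.mkQ_apply, Submodule.Quotient.mk_eq_zero] at h10
        exact h9
      · intro hx
        apply Subtype.ext
        show N.mkQ (P.subtype x) = 0
        rw [Submodule.mkQ_apply, Submodule.Quotient.mk_eq_zero]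
        exact hx
    have hPfin : Module.Finite Λ ↥P := Module.Finite.iff_fg.mpr (IsNoetherian.noetherian P)
    have hPT : ModuleCat.of Λ ↥P ∈ T := by
      apply hT.2.2.2 (ModuleCat.of Λ ↥P) (N.comap P.subtype) hPfin
      · exact tc_iso hT (Submodule.comapSubtypeEquivOfLe hNP).symm hNmem
      · rw [← hkerφ]
        exact tc_iso hT (φ.quotKerEquivOfSurjective hφsurj).symm hS'
    have hPN : P = N := by
      by_contra hne
      exact hNmax _ hPT (lt_of_le_of_ne hNP (Ne.symm hne))
    rw [eq_bot_iff]
    rintro s' hs'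
    obtain ⟨x, rfl⟩ := N.mkQ_surjective s'
    have hxP : x ∈ P := hs'
    rw [hPN] at hxP
    show N.mkQ x ∈ (⊥ : Submodule Λ (X ⧸ N))
    rw [Submodule.mem_bot, Submodule.mkQ_apply, Submodule.Quotient.mk_eq_zero]
    exact hxP

lemma perpt_tperp_sub (k : Type u) [Field k] [Algebra k Λ] [FiniteDimensional k Λ]
    {T : Set (ModuleCat.{u} Λ)} (hT : IsTorsionClass Λ T) : perpt (tperp T) ⊆ T := by
  intro X hX
  obtain ⟨N, hN, _, hq⟩ := exists_max_sub k hT X hX.1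
  have h0 : (N.mkQ : X →ₗ[Λ] X ⧸ N) = 0 := hX.2 _ hq N.mkQ
  have hNtop : N = ⊤ := by
    rw [eq_top_iff]
    intro x _
    have hx : Submodule.Quotient.mk x = (0 : X ⧸ N) := by
      simpa using LinearMap.ext_iff.mp h0 x
    rw [Submodule.Quotient.mk_eq_zero] at hx
    exact hx
  rw [hNtop] at hN
  exact tc_iso hT (Submodule.topEquiv (R := Λ) (M := X)) hN

lemma tperp_sub {T : Set (ModuleCat.{u} Λ)} (hT : IsTorsionClass Λ T) {Y : ModuleCat.{u} Λ}
    (hY : Y ∈ tperp T) (K : Submodule Λ Y) (hfin : Module.Finite Λ K) :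
    ModuleCat.of Λ K ∈ tperp T := by
  refine ⟨hfin, fun S hS => ?_⟩
  have hinj : Function.Injective K.subtype := Subtype.val_injective
  have hmap : ModuleCat.of Λ (S.map K.subtype) ∈ T :=
    tc_iso hT (Submodule.equivMapOfInjective K.subtype hinj S) hS
  have hb : S.map K.subtype = ⊥ := hY.2 _ hmap
  rw [eq_bot_iff]
  intro x hx
  have hmem : x.1 ∈ S.map K.subtype := ⟨x, hx, rfl⟩
  rw [hb, Submodule.mem_bot] at hmem
  rw [Submodule.mem_bot]
  exact Subtype.ext hmem

lemma tc_inter {T U : Set (ModuleCat.{u} Λ)} (hT : IsTorsionClass Λ T)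
    (hU : IsTorsionClass Λ U) : IsTorsionClass Λ (T ∩ U) := by
  refine ⟨fun X hX => hT.1 hX.1, fun X h1 h2 => ⟨hT.2.1 X h1 h2, hU.2.1 X h1 h2⟩, ?_, ?_⟩
  · intro X Y hX f hf
    exact ⟨hT.2.2.1 X Y hX.1 f hf, hU.2.2.1 X Y hX.2 f hf⟩
  · intro X N hfin h1 h2
    exact ⟨hT.2.2.2 X N hfin h1.1 h2.1, hU.2.2.2 X N hfin h1.2 h2.2⟩

lemma finite_tc : IsTorsionClass Λ {X : ModuleCat.{u} Λ | Module.Finite Λ X} := by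
  refine ⟨le_refl _, fun X hf _ => hf, ?_, ?_⟩
  · intro X Y hX f hf
    haveI : Module.Finite Λ X := hX
    exact Module.Finite.of_surjective f.hom hf
  · intro X N hfin _ _
    exact hfin

lemma torsJoin_tc {T U : Set (ModuleCat.{u} Λ)} (hT : IsTorsionClass Λ T)
    (hU : IsTorsionClass Λ U) : IsTorsionClass Λ (torsJoin Λ T U) := by
  refine ⟨?_, ?_, ?_, ?_⟩
  · intro X hX
    exact Set.mem_sInter.mp hX {X | Module.Finite Λ X} ⟨finite_tc, hT.1, hU.1⟩
  · intro X h1 h2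
    exact Set.mem_sInter.mpr fun V hV => hV.1.2.1 X h1 h2
  · intro X Y hX f hf
    exact Set.mem_sInter.mpr fun V hV => hV.1.2.2.1 X Y (Set.mem_sInter.mp hX V hV) f hf
  · intro X N hfin h1 h2
    exact Set.mem_sInter.mpr fun V hV =>
      hV.1.2.2.2 X N hfin (Set.mem_sInter.mp h1 V hV) (Set.mem_sInter.mp h2 V hV)

lemma left_sub_torsJoin {T U : Set (ModuleCat.{u} Λ)} : T ⊆ torsJoin Λ T U :=
  fun _ hX => Set.mem_sInter.mpr fun _ hV => hV.2.1 hX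

lemma right_sub_torsJoin {T U : Set (ModuleCat.{u} Λ)} : U ⊆ torsJoin Λ T U :=
  fun _ hX => Set.mem_sInter.mpr fun _ hV => hV.2.2 hX

lemma torsJoin_min {T U V : Set (ModuleCat.{u} Λ)} (hV : IsTorsionClass Λ V)
    (h1 : T ⊆ V) (h2 : U ⊆ V) : torsJoin Λ T U ⊆ V :=
  fun _ hX => Set.mem_sInter.mp hX V ⟨hV, h1, h2⟩

lemma tperp_torsJoin {T U : Set (ModuleCat.{u} Λ)} (hT : IsTorsionClass Λ T)
    (hU : IsTorsionClass Λ U) : tperp (torsJoin Λ T U) = tperp T ∩ tperp U := by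
  apply Set.Subset.antisymm
  · intro Y hY
    exact ⟨tperp_anti left_sub_torsJoin hY, tperp_anti right_sub_torsJoin hY⟩
  · rintro Y ⟨hY1, hY2⟩
    refine ⟨hY1.1, fun S hS => ?_⟩
    have hVtc : IsTorsionClass Λ (perpt (tperp T ∩ tperp U)) := perpt_tc _
    have hTV : T ⊆ perpt (tperp T ∩ tperp U) :=
      tc_sub_perpt hT Set.inter_subset_left
    have hUV : U ⊆ perpt (tperp T ∩ tperp U) :=
      tc_sub_perpt hU Set.inter_subset_right
    have hS' : ModuleCat.of Λ S ∈ perpt (tperp T ∩ tperp U) :=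
      torsJoin_min hVtc hTV hUV hS
    have h0 : (S.subtype : ↥S →ₗ[Λ] Y) = 0 := hS'.2 Y ⟨hY1, hY2⟩ S.subtype
    rw [eq_bot_iff]
    intro x hx
    have := LinearMap.ext_iff.mp h0 ⟨x, hx⟩
    rw [Submodule.mem_bot]
    simpa using this

lemma kdim_pos (k : Type u) [Field k] [Algebra k Λ] [FiniteDimensional k Λ]
    (M : ModuleCat.{u} Λ) (hM : Module.Finite Λ M) (hns : ¬ Subsingleton M) :
    0 < kdim k M := by
  letI : Module k M := Module.compHom M (algebraMap k Λ)
  haveI : IsScalarTower k Λ M := ⟨fun c l x => by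
    show (c • l) • x = algebraMap k Λ c • (l • x); rw [Algebra.smul_def, mul_smul]⟩
  haveI : Module.Finite k M := Module.Finite.trans Λ M
  haveI : Nontrivial M := not_subsingleton_iff_nontrivial.mp hns
  show 0 < Module.finrank k M
  exact Module.finrank_pos_iff.mpr ‹_›

lemma exists_tsub (k : Type u) [Field k] [Algebra k Λ] [FiniteDimensional k Λ]
    {T U : Set (ModuleCat.{u} Λ)} (hT : IsTorsionClass Λ T) (hU : IsTorsionClass Λ U)
    {M : ModuleCat.{u} Λ} (hM : M ∈ torsJoin Λ T U) (hns : ¬ Subsingleton M) :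
    ∃ S : Submodule Λ M, S ≠ ⊥ ∧ (ModuleCat.of Λ S ∈ T ∨ ModuleCat.of Λ S ∈ U) := by
  by_contra hcon
  have hfin : Module.Finite Λ M := (torsJoin_tc hT hU).1 hM
  have hMt : M ∈ tperp T := by
    refine ⟨hfin, fun S hS => ?_⟩
    by_contra hSb
    exact hcon ⟨S, hSb, Or.inl hS⟩
  have hMu : M ∈ tperp U := by
    refine ⟨hfin, fun S hS => ?_⟩
    by_contra hSb
    exact hcon ⟨S, hSb, Or.inr hS⟩
  have hMp : M ∈ perpt (tperp (torsJoin Λ T U)) :=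
    tc_sub_perpt (torsJoin_tc hT hU) (subset_refl _) hM
  have hMtj : M ∈ tperp (torsJoin Λ T U) := by
    rw [tperp_torsJoin hT hU]; exact ⟨hMt, hMu⟩
  have hid : (LinearMap.id : M →ₗ[Λ] M) = 0 := hMp.2 M hMtj LinearMap.id
  apply hns
  constructor
  intro a b
  have ha := LinearMap.ext_iff.mp hid a
  have hb := LinearMap.ext_iff.mp hid b
  simp only [LinearMap.id_apply, LinearMap.zero_apply] at ha hb
  rw [ha, hb]

lemma meetSD (k : Type u) [Field k] [Algebra k Λ] [FiniteDimensional k Λ]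
    {T₁ T₂ T₃ : Set (ModuleCat.{u} Λ)} (h1 : IsTorsionClass Λ T₁) (h2 : IsTorsionClass Λ T₂)
    (h3 : IsTorsionClass Λ T₃) (heq : T₁ ∩ T₃ = T₂ ∩ T₃) :
    ∀ (n : ℕ) (M : ModuleCat.{u} Λ), kdim k M ≤ n →
      M ∈ torsJoin Λ T₁ T₂ → M ∈ T₃ → M ∈ T₁ ∩ T₃ := by
  intro n
  induction n with
  | zero =>
    intro M hdim hJ h3m
    by_cases hs : Subsingleton M
    · haveI := hs
      exact ⟨tc_zero h1 M, h3m⟩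
    · have := kdim_pos k M (h3.1 h3m) hs
      omega
  | succ n ih =>
    intro M hdim hJ h3m
    by_cases hs : Subsingleton M
    · haveI := hs
      exact ⟨tc_zero h1 M, h3m⟩
    · obtain ⟨S, hSb, hST⟩ := exists_tsub k h1 h2 hJ hs
      obtain ⟨x, hxS, hx0⟩ := (Submodule.ne_bot_iff S).mp hSb
      have hMfin : Module.Finite Λ M := h3.1 h3m
      have hfx : S.mkQ x = 0 := by
        rw [Submodule.mkQ_apply, Submodule.Quotient.mk_eq_zero]; exact hxS
      have hlt : kdim k (ModuleCat.of Λ (M ⧸ S)) < kdim k M :=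
        kdim_lt_of_surj k M (ModuleCat.of Λ (M ⧸ S)) hMfin S.mkQ S.mkQ_surjective hx0 hfx
      have hQJ : ModuleCat.of Λ (M ⧸ S) ∈ torsJoin Λ T₁ T₂ :=
        (torsJoin_tc h1 h2).2.2.1 M _ hJ (ModuleCat.ofHom S.mkQ) S.mkQ_surjective
      have hQ3 : ModuleCat.of Λ (M ⧸ S) ∈ T₃ := h3.2.2.1 M _ h3m (ModuleCat.ofHom S.mkQ) S.mkQ_surjective
      have hQ : ModuleCat.of Λ (M ⧸ S) ∈ T₁ ∩ T₃ := ih _ (by omega) hQJ hQ3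
      rcases hST with hS1 | hS2
      · exact ⟨h1.2.2.2 M S hMfin hS1 hQ.1, h3m⟩
      · have hQ2 : ModuleCat.of Λ (M ⧸ S) ∈ T₂ ∩ T₃ := heq ▸ hQ
        have hM2 : M ∈ T₂ := h2.2.2.2 M S hMfin hS2 hQ2.1
        have : M ∈ T₂ ∩ T₃ := ⟨hM2, h3m⟩
        rw [← heq] at this
        exact this

lemma torfSD (k : Type u) [Field k] [Algebra k Λ] [FiniteDimensional k Λ]
    {T₁ T₂ T₃ : Set (ModuleCat.{u} Λ)} (h1 : IsTorsionClass Λ T₁) (h2 : IsTorsionClass Λ T₂)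
    (h3 : IsTorsionClass Λ T₃)
    (hG : tperp T₁ ∩ tperp T₃ = tperp T₂ ∩ tperp T₃) :
    ∀ (n : ℕ) (Y : ModuleCat.{u} Λ), kdim k Y ≤ n →
      Y ∈ tperp (T₁ ∩ T₂) → Y ∈ tperp T₃ → Y ∈ tperp T₁ := by
  have triv : ∀ Y : ModuleCat.{u} Λ, Module.Finite Λ Y → Subsingleton Y → Y ∈ tperp T₁ := by
    intro Y hfin hs
    refine ⟨hfin, fun N _ => ?_⟩
    rw [eq_bot_iff]
    intro x _
    rw [Submodule.mem_bot]
    exact Subsingleton.elim x 0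
  intro n
  induction n with
  | zero =>
    intro Y hdim hY12 hY3
    by_cases hs : Subsingleton Y
    · exact triv Y hY12.1 hs
    · have := kdim_pos k Y hY12.1 hs
      omega
  | succ n ih =>
    intro Y hdim hY12 hY3
    by_cases hs : Subsingleton Y
    · exact triv Y hY12.1 hs
    · have hYfin : Module.Finite Λ Y := hY12.1
      obtain ⟨N₁, hN1mem, hN1max, _⟩ := exists_max_sub k h1 Y hYfin
      by_cases hN1top : N₁ = ⊤
      · -- Y ∈ T₁
        have hY1 : Y ∈ T₁ := by
          rw [hN1top] at hN1mem
          exact tc_iso h1 (Submodule.topEquiv (R := Λ) (M := Y)) hN1mem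
        obtain ⟨N₂, hN2mem, hN2max, _⟩ := exists_max_sub k h2 Y hYfin
        by_cases hN2top : N₂ = ⊤
        · -- Y ∈ T₂ as well, so Y is subsingleton: contradiction route gives tperp anyway
          have hY2 : Y ∈ T₂ := by
            rw [hN2top] at hN2mem
            exact tc_iso h2 (Submodule.topEquiv (R := Λ) (M := Y)) hN2mem
          have htop : ModuleCat.of Λ (⊤ : Submodule Λ Y) ∈ T₁ ∩ T₂ :=
            ⟨tc_iso h1 (Submodule.topEquiv (R := Λ) (M := Y)).symm hY1,
             tc_iso h2 (Submodule.topEquiv (R := Λ) (M := Y)).symm hY2⟩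
          have hbot : (⊤ : Submodule Λ Y) = ⊥ := hY12.2 ⊤ htop
          have hsY : Subsingleton Y := by
            constructor
            intro a b
            have ha : a ∈ (⊥ : Submodule Λ Y) := hbot ▸ Submodule.mem_top
            have hb : b ∈ (⊥ : Submodule Λ Y) := hbot ▸ Submodule.mem_top
            rw [Submodule.mem_bot] at ha hb
            rw [ha, hb]
          exact triv Y hYfin hsY
        · -- induct on N₂
          have hKfin : Module.Finite Λ N₂ := h2.1 hN2mem
          have hK12 : ModuleCat.of Λ N₂ ∈ tperp (T₁ ∩ T₂) :=
            tperp_sub (tc_inter h1 h2) hY12 N₂ hKfin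
          have hK3 : ModuleCat.of Λ N₂ ∈ tperp T₃ := tperp_sub h3 hY3 N₂ hKfin
          have hlt : kdim k (ModuleCat.of Λ N₂) < kdim k Y :=
            kdim_lt_of_proper k Y hYfin N₂ hN2top
          have hK1 : ModuleCat.of Λ N₂ ∈ tperp T₁ := ih _ (by omega) hK12 hK3
          have hK2 : ModuleCat.of Λ N₂ ∈ tperp T₂ := by
            have : ModuleCat.of Λ N₂ ∈ tperp T₁ ∩ tperp T₃ := ⟨hK1, hK3⟩
            rw [hG] at this
            exact this.1
          have htopK : ModuleCat.of Λ (⊤ : Submodule Λ (ModuleCat.of Λ N₂)) ∈ T₂ :=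
            tc_iso h2 (Submodule.topEquiv (R := Λ) (M := (ModuleCat.of Λ N₂))).symm hN2mem
          have hbotK : (⊤ : Submodule Λ (ModuleCat.of Λ N₂)) = ⊥ := hK2.2 ⊤ htopK
          have hN2bot : N₂ = ⊥ := by
            rw [eq_bot_iff]
            intro x hx
            have : (⟨x, hx⟩ : N₂) ∈ (⊥ : Submodule Λ (ModuleCat.of Λ N₂)) :=
              hbotK ▸ Submodule.mem_top
            rw [Submodule.mem_bot] at this
            rw [Submodule.mem_bot]
            exact congrArg Subtype.val this
          have hYt2 : Y ∈ tperp T₂ := by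
            refine ⟨hYfin, fun S hS => ?_⟩
            have := hN2max S hS
            rw [hN2bot] at this
            exact le_bot_iff.mp this
          have : Y ∈ tperp T₂ ∩ tperp T₃ := ⟨hYt2, hY3⟩
          rw [← hG] at this
          exact this.1
      · -- induct on N₁
        have hKfin : Module.Finite Λ N₁ := h1.1 hN1mem
        have hK12 : ModuleCat.of Λ N₁ ∈ tperp (T₁ ∩ T₂) :=
          tperp_sub (tc_inter h1 h2) hY12 N₁ hKfin
        have hK3 : ModuleCat.of Λ N₁ ∈ tperp T₃ := tperp_sub h3 hY3 N₁ hKfin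
        have hlt : kdim k (ModuleCat.of Λ N₁) < kdim k Y :=
          kdim_lt_of_proper k Y hYfin N₁ hN1top
        have hK1 : ModuleCat.of Λ N₁ ∈ tperp T₁ := ih _ (by omega) hK12 hK3
        have htopK : ModuleCat.of Λ (⊤ : Submodule Λ (ModuleCat.of Λ N₁)) ∈ T₁ :=
          tc_iso h1 (Submodule.topEquiv (R := Λ) (M := (ModuleCat.of Λ N₁))).symm hN1mem
        have hbotK : (⊤ : Submodule Λ (ModuleCat.of Λ N₁)) = ⊥ := hK1.2 ⊤ htopK
        have hN1bot : N₁ = ⊥ := by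
          rw [eq_bot_iff]
          intro x hx
          have : (⟨x, hx⟩ : N₁) ∈ (⊥ : Submodule Λ (ModuleCat.of Λ N₁)) :=
            hbotK ▸ Submodule.mem_top
          rw [Submodule.mem_bot] at this
          rw [Submodule.mem_bot]
          exact congrArg Subtype.val this
        refine ⟨hYfin, fun S hS => ?_⟩
        have := hN1max S hS
        rw [hN1bot] at this
        exact le_bot_iff.mp this

theorem stmt6' (k : Type u) [Field k] (Λ : Type u) [Ring Λ] [Algebra k Λ]
    [FiniteDimensional k Λ] :
    (∀ T₁ T₂ T₃ : Set (ModuleCat.{u} Λ),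
      IsTorsionClass Λ T₁ → IsTorsionClass Λ T₂ → IsTorsionClass Λ T₃ →
      T₁ ∩ T₃ = T₂ ∩ T₃ → torsJoin Λ T₁ T₂ ∩ T₃ = T₁ ∩ T₃) ∧
    (∀ T₁ T₂ T₃ : Set (ModuleCat.{u} Λ),
      IsTorsionClass Λ T₁ → IsTorsionClass Λ T₂ → IsTorsionClass Λ T₃ →
      torsJoin Λ T₁ T₃ = torsJoin Λ T₂ T₃ →
      torsJoin Λ (T₁ ∩ T₂) T₃ = torsJoin Λ T₁ T₃) := by
  constructor
  · intro T₁ T₂ T₃ h1 h2 h3 heq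
    apply Set.Subset.antisymm
    · rintro X ⟨hXJ, hX3⟩
      exact meetSD k h1 h2 h3 heq (kdim k X) X le_rfl hXJ hX3
    · intro X hX
      exact ⟨left_sub_torsJoin hX.1, hX.2⟩
  · intro T₁ T₂ T₃ h1 h2 h3 heq
    have h12 := tc_inter h1 h2
    have hJ1 := torsJoin_tc h1 h3
    have hW := torsJoin_tc h12 h3
    have hG : tperp T₁ ∩ tperp T₃ = tperp T₂ ∩ tperp T₃ := by
      have hc := congrArg tperp heq
      rwa [tperp_torsJoin h1 h3, tperp_torsJoin h2 h3] at hc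
    apply Set.Subset.antisymm
    · exact torsJoin_min hJ1 (fun X hX => left_sub_torsJoin hX.1) right_sub_torsJoin
    · have hsub : tperp (torsJoin Λ (T₁ ∩ T₂) T₃) ⊆ tperp (torsJoin Λ T₁ T₃) := by
        intro Y hY
        rw [tperp_torsJoin h12 h3] at hY
        rw [tperp_torsJoin h1 h3]
        exact ⟨torfSD k h1 h2 h3 hG (kdim k Y) Y le_rfl hY.1 hY.2, hY.2⟩
      intro X hX
      have hX' : X ∈ perpt (tperp (torsJoin Λ T₁ T₃)) := tc_sub_perpt hJ1 (subset_refl _) hX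
      have hX'' : X ∈ perpt (tperp (torsJoin Λ (T₁ ∩ T₂) T₃)) := perpt_anti hsub hX'
      exact perpt_tperp_sub k hW hX''

end Stmt6

/-- For a finite-dimensional algebra `Λ`, the lattice `tors(Λ)` is
semidistributive: both meet-semidistributive and join-semidistributive
(meet is intersection, join is `torsJoin`). -/
theorem stmt6 (k : Type u) [Field k] (Λ : Type u) [Ring Λ] [Algebra k Λ]
    [FiniteDimensional k Λ] :
    (∀ T₁ T₂ T₃ : Set (ModuleCat.{u} Λ),
      IsTorsionClass Λ T₁ → IsTorsionClass Λ T₂ → IsTorsionClass Λ T₃ →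
      T₁ ∩ T₃ = T₂ ∩ T₃ → torsJoin Λ T₁ T₂ ∩ T₃ = T₁ ∩ T₃) ∧
    (∀ T₁ T₂ T₃ : Set (ModuleCat.{u} Λ),
      IsTorsionClass Λ T₁ → IsTorsionClass Λ T₂ → IsTorsionClass Λ T₃ →
      torsJoin Λ T₁ T₃ = torsJoin Λ T₂ T₃ →
      torsJoin Λ (T₁ ∩ T₂) T₃ = torsJoin Λ T₁ T₃) := by
  exact Stmt6.stmt6' k Λ
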